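/- Let r = 0.8 and c = 1/(8^r - 6^r). If x, y, z are nonnegative reals with x ≥ 6·z and y ≥ z, then c·x^r + y^r ≥ c·(x + y + z)^r. -/

import Mathlib

open Real Set

lemma key_068 (a b s : ℝ) (ha : 0 ≤ a) (hab : a ≤ b) (hs : 0 ≤ s) :
    (b + s) ^ (0.8:ℝ) - b ^ (0.8:ℝ) ≤ (a + s) ^ (0.8:ℝ) - a ^ (0.8:ℝ) := by
  have hr0 : (0:ℝ) ≤ 0.8 := by norm_num
  have mono : MonotoneOn (fun u : ℝ => u ^ (0.8:ℝ) - (u + s) ^ (0.8:ℝ)) (Ici 0) := by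
    apply monotoneOn_of_deriv_nonneg (convex_Ici 0)
    · exact ((Real.continuous_rpow_const hr0).sub
        ((Real.continuous_rpow_const hr0).comp (continuous_id.add continuous_const))).continuousOn
    · intro u hu
      rw [interior_Ici] at hu
      have hup : (0:ℝ) < u := hu
      have hu0 : u ≠ 0 := ne_of_gt hup
      have hus : u + s ≠ 0 := by positivity
      have h1 := Real.hasDerivAt_rpow_const (p := 0.8) (Or.inl hu0)
      have h2 := (Real.hasDerivAt_rpow_const (p := 0.8) (Or.inl hus)).comp u
        ((hasDerivAt_id u).add_const s)
      exact (h1.sub (by simpa [Function.comp_def] using h2)).differentiableAt.differentiableWithinAt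
    · intro u hu
      rw [interior_Ici] at hu
      have hup : (0:ℝ) < u := hu
      have hu0 : u ≠ 0 := ne_of_gt hup
      have hus0 : (0:ℝ) < u + s := by linarith
      have h1 := Real.hasDerivAt_rpow_const (p := 0.8) (Or.inl hu0)
      have h2 := (Real.hasDerivAt_rpow_const (p := 0.8) (Or.inl hus0.ne')).comp u
        ((hasDerivAt_id u).add_const s)
      have hd : deriv (fun u : ℝ => u ^ (0.8:ℝ) - (u + s) ^ (0.8:ℝ)) u
          = 0.8 * u ^ ((0.8:ℝ) - 1) - 0.8 * (u + s) ^ ((0.8:ℝ) - 1) := by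
        have := (h1.sub (by simpa [Function.comp_def] using h2)).deriv
        exact this
      rw [hd]
      have : (u + s) ^ ((0.8:ℝ) - 1) ≤ u ^ ((0.8:ℝ) - 1) :=
        Real.rpow_le_rpow_of_nonpos hup (by linarith) (by norm_num)
      nlinarith
  have := mono (mem_Ici.2 ha) (mem_Ici.2 (ha.trans hab)) hab
  simp only at this
  linarith

lemma pow5_068 (w : ℝ) (hw : 0 ≤ w) : (w ^ (0.8:ℝ)) ^ (5:ℕ) = w ^ (4:ℕ) := by
  rw [← Real.rpow_natCast (w ^ (0.8:ℝ)) 5, ← Real.rpow_mul hw]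
  norm_num

theorem stmt_6 (r c : ℝ) (hr : r = 0.8)
    (hc : c = 1 / ((8 : ℝ) ^ r - (6 : ℝ) ^ r))
    (x y z : ℝ) (hx0 : 0 ≤ x) (hy0 : 0 ≤ y) (hz0 : 0 ≤ z)
    (hx : x ≥ 6 * z) (hy : y ≥ z) :
    c * x ^ r + y ^ r ≥ c * (x + y + z) ^ r := by
  subst hr
  set t := (6:ℝ) ^ (0.8:ℝ) with hT
  set s := (8:ℝ) ^ (0.8:ℝ) with hS
  have ht0 : 0 ≤ t := Real.rpow_nonneg (by norm_num) _
  have hs0 : 0 ≤ s := Real.rpow_nonneg (by norm_num) _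
  have ht5 : t ^ (5:ℕ) = 1296 := by rw [hT, pow5_068 6 (by norm_num)]; norm_num
  have hs5 : s ^ (5:ℕ) = 4096 := by rw [hS, pow5_068 8 (by norm_num)]; norm_num
  have ht42 : t ≤ 4.2 := by
    apply le_of_pow_le_pow_left₀ (n := 5) (by norm_num) (by norm_num)
    rw [ht5]; norm_num
  have hst : 1 + t ≤ s := by
    apply le_of_pow_le_pow_left₀ (n := 5) (by norm_num) hs0
    calc (1 + t) ^ (5:ℕ) ≤ (5.2:ℝ) ^ (5:ℕ) := by
          apply pow_le_pow_left₀ (by linarith) (by linarith)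
      _ ≤ 4096 := by norm_num
      _ = s ^ (5:ℕ) := hs5.symm
  have hD1 : 1 ≤ s - t := by linarith
  have hD0 : 0 < s - t := by linarith
  have hc0 : 0 < c := by rw [hc]; positivity
  have hc1 : c ≤ 1 := by rw [hc]; rw [div_le_one hD0] at *; linarith
  have hcD : c * (s - t) = 1 := by rw [hc]; field_simp
  have k1 := key_068 (6*z) x (y+z) (by positivity) hx (by positivity)
  have k2 := key_068 z y (7*z) hz0 hy (by positivity)
  rw [show x + (y+z) = x+y+z by ring, show 6*z + (y+z) = 8*z - 2*z + (y+z) by ring] at k1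
  rw [show 8*z - 2*z + (y+z) = y + 7*z by ring] at k1
  rw [show z + 7*z = 8*z by ring] at k2
  have m8 : ((8:ℝ)*z) ^ (0.8:ℝ) = s * z ^ (0.8:ℝ) := Real.mul_rpow (by norm_num) hz0
  have m6 : ((6:ℝ)*z) ^ (0.8:ℝ) = t * z ^ (0.8:ℝ) := Real.mul_rpow (by norm_num) hz0
  rw [m6] at k1
  rw [m8] at k2
  have hyz : z ^ (0.8:ℝ) ≤ y ^ (0.8:ℝ) := Real.rpow_le_rpow hz0 hy (by norm_num)
  have hz8 : 0 ≤ z ^ (0.8:ℝ) := Real.rpow_nonneg hz0 _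
  have kk : (x+y+z) ^ (0.8:ℝ) ≤ x ^ (0.8:ℝ) + y ^ (0.8:ℝ) + (s - t) * z ^ (0.8:ℝ)
      - z ^ (0.8:ℝ) := by nlinarith
  have := mul_le_mul_of_nonneg_left kk hc0.le
  nlinarith [mul_nonneg (sub_nonneg.2 hc1) (sub_nonneg.2 hyz)]
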